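/- Let 𝓡 be partitioned into disjoint blocks 𝓑₁, …, 𝓑_M, and let Q be a row-stochastic matrix on 𝓡×𝓡 such that Q(·|r) = Q(·|r') whenever r and r' lie in the same block, Q(r̃|r) = 0 whenever r̃ lies outside the block of r, and Q(r|r) > 0 for every r. Let P̃(r̃|s) = ∑_r P(r|s)Q(r̃|r), and let m(r) denote the block index of r, with the block variable having conditional law P(m|s) = ∑_{r∈𝓑_m} P(r|s). Then: (i) I(S;R̃) = I(S;M), where I(S;R̃) and I(S;M) are the mutual informations computed from P̃(r̃|s) and P(m|s) respectively; and (ii) ∑_{s,r : P(s,r)>0} P(s,r) log(P(s|r)/P̃(s|r)) = I(S;R) − I(S;R̃), where P̃(s|r) is the posterior computed from the P̃-distribution (well-defined at every r with P(r) > 0 since Q(r|r) > 0). That is, under these hypotheses the decoding-oriented loss ΔI^D equals the encoding-oriented information loss ΔI(R;R̃) (Theorem 5). -/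

import Mathlib

open scoped BigOperators

/-- Mutual information of `S` with a code having conditional distribution `G(x|s)`:
`I = ∑_{s,x} p(s) G(x|s) log (G(x|s) / ∑_{s'} p(s') G(x|s'))`, with `0·log 0 = 0`. -/
noncomputable def mutInfo {S X : Type*} [Fintype S] [Fintype X]
    (p : S → ℝ) (G : S → X → ℝ) : ℝ :=
  ∑ s, ∑ x, p s * G s x * Real.log (G s x / ∑ s', p s' * G s' x)

/-- For a block-respecting stochastic code `Q` (rows constant within
blocks, vanishing across blocks, positive diagonal) with induced surrogate
`P̃(r̃|s) = ∑_r P(r|s) Q(r̃|r)`: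
(i) `I(S;R̃) = I(S;M)`, the information carried by the block variable; and
(ii) the decoding-oriented loss `∑_{s,r : P(s,r)>0} P(s,r) log (P(s|r)/P̃(s|r))`
equals the encoding-oriented loss `I(S;R) − I(S;R̃)`. -/
theorem block_stochastic_code_encoding_equals_decoding
    {S R B : Type*} [Fintype S] [Fintype R] [Fintype B] [DecidableEq B]
    (p : S → ℝ) (hp0 : ∀ s, 0 ≤ p s) (hp1 : ∑ s, p s = 1)
    (P : S → R → ℝ) (hP0 : ∀ s r, 0 ≤ P s r) (hP1 : ∀ s, ∑ r, P s r = 1)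
    (blk : R → B)
    (Q : R → R → ℝ) (hQ0 : ∀ r rt, 0 ≤ Q r rt) (hQ1 : ∀ r, ∑ rt, Q r rt = 1)
    (hsame : ∀ r r', blk r = blk r' → ∀ rt, Q r rt = Q r' rt)
    (hblock : ∀ r rt, blk rt ≠ blk r → Q r rt = 0)
    (hdiag : ∀ r, 0 < Q r r) :
    mutInfo p (fun s rt => ∑ r, P s r * Q r rt) =
      mutInfo p (fun s m => ∑ r, if blk r = m then P s r else 0) ∧
    (∑ s, ∑ r, if 0 < p s * P s r then
        p s * P s r * Real.log
          (((p s * P s r) / (∑ s', p s' * P s' r)) /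
            ((p s * ∑ r', P s r' * Q r' r) /
              (∑ s', p s' * ∑ r', P s' r' * Q r' r)))
      else 0) =
      mutInfo p P - mutInfo p (fun s rt => ∑ r, P s r * Q r rt) := by
  classical
  -- block marginal
  set PM : S → B → ℝ := fun s m => ∑ r, if blk r = m then P s r else 0 with hPMdef
  set Den : B → ℝ := fun m => ∑ s', p s' * PM s' m with hDendef
  have hPMnn : ∀ s m, 0 ≤ PM s m := by
    intro s m
    refine Finset.sum_nonneg fun r _ => ?_
    split
    · exact hP0 s r
    · exact le_refl 0
  -- structure of the surrogate
  have hA : ∀ s rt, (∑ r, P s r * Q r rt) = PM s (blk rt) * Q rt rt := by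
    intro s rt
    rw [hPMdef]
    simp only [Finset.sum_mul]
    refine Finset.sum_congr rfl fun r _ => ?_
    by_cases h : blk r = blk rt
    · rw [if_pos h, hsame r rt h rt]
    · rw [if_neg h, hblock r rt (Ne.symm h), mul_zero, zero_mul]
  have hDen : ∀ rt, (∑ s', p s' * ∑ r, P s' r * Q r rt) = Den (blk rt) * Q rt rt := by
    intro rt
    rw [hDendef]
    simp only [Finset.sum_mul]
    exact Finset.sum_congr rfl fun s' _ => by rw [hA, mul_assoc]
  -- grouping by blocks
  have hgroup : ∀ (f : R → ℝ) (L : B → ℝ),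
      (∑ r, f r * L (blk r)) = ∑ m, (∑ r, if blk r = m then f r else 0) * L m := by
    intro f L
    have h1 : ∀ r, f r * L (blk r) = ∑ m, if blk r = m then f r * L m else 0 := by
      intro r
      rw [Finset.sum_ite_eq]
      simp
    rw [Finset.sum_congr rfl fun r _ => h1 r, Finset.sum_comm]
    refine Finset.sum_congr rfl fun m _ => ?_
    rw [Finset.sum_mul]
    refine Finset.sum_congr rfl fun r _ => ?_
    split <;> simp
  -- diagonal weights sum to 1 over each nonempty block
  have hQblk : ∀ r0 : R, (∑ rt, if blk rt = blk r0 then Q rt rt else 0) = 1 := by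
    intro r0
    rw [← hQ1 r0]
    refine Finset.sum_congr rfl fun rt _ => ?_
    by_cases h : blk rt = blk r0
    · rw [if_pos h, hsame rt r0 h rt]
    · rw [if_neg h, (hblock r0 rt h)]
  have hcollapse : ∀ (F : B → ℝ), (∀ m, (∀ r, blk r ≠ m) → F m = 0) →
      (∑ rt, Q rt rt * F (blk rt)) = ∑ m, F m := by
    intro F hF
    rw [hgroup (fun rt => Q rt rt) F]
    refine Finset.sum_congr rfl fun m _ => ?_
    by_cases h : ∃ r0, blk r0 = m
    · obtain ⟨r0, rfl⟩ := h
      rw [hQblk r0, one_mul]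
    · push_neg at h
      rw [hF m h, mul_zero]
  -- key identity for I(S;R̃)
  have hI_tilde : mutInfo p (fun s rt => ∑ r, P s r * Q r rt)
      = ∑ s, ∑ m, p s * PM s m * Real.log (PM s m / Den m) := by
    unfold mutInfo
    refine Finset.sum_congr rfl fun s _ => ?_
    have step : ∀ rt, p s * (∑ r, P s r * Q r rt) *
        Real.log ((∑ r, P s r * Q r rt) / ∑ s', p s' * ∑ r, P s' r * Q r rt)
        = Q rt rt * (p s * PM s (blk rt) * Real.log (PM s (blk rt) / Den (blk rt))) := by
      intro rt
      rw [hA, hDen, mul_div_mul_right _ _ (ne_of_gt (hdiag rt))]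
      ring
    rw [Finset.sum_congr rfl fun rt _ => step rt]
    refine hcollapse (fun m => p s * PM s m * Real.log (PM s m / Den m)) fun m hm => ?_
    have h0 : PM s m = 0 := Finset.sum_eq_zero fun r _ => if_neg (hm r)
    show p s * PM s m * Real.log (PM s m / Den m) = 0
    rw [h0, mul_zero, zero_mul]
  constructor
  · -- Part (i)
    rw [hI_tilde]
    rfl
  · -- Part (ii)
    have hterm : ∀ s r, (if 0 < p s * P s r then
        p s * P s r * Real.log
          (((p s * P s r) / (∑ s', p s' * P s' r)) /
            ((p s * ∑ r', P s r' * Q r' r) /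
              (∑ s', p s' * ∑ r', P s' r' * Q r' r)))
        else 0)
        = p s * P s r * Real.log (P s r / ∑ s', p s' * P s' r)
          - p s * P s r * Real.log (PM s (blk r) / Den (blk r)) := by
      intro s r
      by_cases h : 0 < p s * P s r
      · rw [if_pos h]
        have hps : 0 < p s := by
          rcases (hp0 s).lt_or_eq with h' | h'
          · exact h'
          · exfalso; rw [← h', zero_mul] at h; exact lt_irrefl 0 h
        have hPsr : 0 < P s r := by
          rcases (hP0 s r).lt_or_eq with h' | h'
          · exact h'
          · exfalso; rw [← h', mul_zero] at h; exact lt_irrefl 0 h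
        have hPr : 0 < ∑ s', p s' * P s' r :=
          lt_of_lt_of_le h (Finset.single_le_sum
            (fun s' _ => mul_nonneg (hp0 s') (hP0 s' r)) (Finset.mem_univ s))
        have hPMb : 0 < PM s (blk r) := by
          have h1 : (if blk r = blk r then P s r else 0) ≤ PM s (blk r) :=
            Finset.single_le_sum (f := fun r' => if blk r' = blk r then P s r' else 0)
              (fun r' _ => by
                split
                · exact hP0 s r'
                · exact le_refl 0) (Finset.mem_univ r)
          rw [if_pos rfl] at h1
          exact lt_of_lt_of_le hPsr h1
        have hDenb : 0 < Den (blk r) := by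
          have h1 : p s * PM s (blk r) ≤ Den (blk r) :=
            Finset.single_le_sum (fun s' _ => mul_nonneg (hp0 s') (hPMnn s' (blk r)))
              (Finset.mem_univ s)
          exact lt_of_lt_of_le (mul_pos hps hPMb) h1
        rw [hA s r, hDen r, ← mul_assoc, mul_div_mul_right _ _ (ne_of_gt (hdiag r)),
          Real.log_div (ne_of_gt (div_pos h hPr))
            (ne_of_gt (div_pos (mul_pos hps hPMb) hDenb)),
          Real.log_div (ne_of_gt h) (ne_of_gt hPr),
          Real.log_div (ne_of_gt (mul_pos hps hPMb)) (ne_of_gt hDenb),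
          Real.log_mul (ne_of_gt hps) (ne_of_gt hPsr),
          Real.log_mul (ne_of_gt hps) (ne_of_gt hPMb),
          Real.log_div (ne_of_gt hPsr) (ne_of_gt hPr),
          Real.log_div (ne_of_gt hPMb) (ne_of_gt hDenb)]
        ring
      · rw [if_neg h]
        have h0 : p s * P s r = 0 :=
          le_antisymm (not_lt.mp h) (mul_nonneg (hp0 s) (hP0 s r))
        rw [h0, zero_mul, zero_mul, sub_zero]
    calc (∑ s, ∑ r, if 0 < p s * P s r then
        p s * P s r * Real.log
          (((p s * P s r) / (∑ s', p s' * P s' r)) /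
            ((p s * ∑ r', P s r' * Q r' r) /
              (∑ s', p s' * ∑ r', P s' r' * Q r' r)))
      else 0)
        = ∑ s, ∑ r, (p s * P s r * Real.log (P s r / ∑ s', p s' * P s' r)
            - p s * P s r * Real.log (PM s (blk r) / Den (blk r))) :=
          Finset.sum_congr rfl fun s _ => Finset.sum_congr rfl fun r _ => hterm s r
      _ = (∑ s, ∑ r, p s * P s r * Real.log (P s r / ∑ s', p s' * P s' r))
            - ∑ s, ∑ r, p s * P s r * Real.log (PM s (blk r) / Den (blk r)) := by
          rw [← Finset.sum_sub_distrib]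
          exact Finset.sum_congr rfl fun s _ => Finset.sum_sub_distrib _ _
      _ = mutInfo p P - mutInfo p (fun s rt => ∑ r, P s r * Q r rt) := by
          congr 1
          rw [hI_tilde]
          refine Finset.sum_congr rfl fun s _ => ?_
          rw [hgroup (fun r => p s * P s r) (fun m => Real.log (PM s m / Den m))]
          refine Finset.sum_congr rfl fun m _ => ?_
          have : (∑ r, if blk r = m then p s * P s r else 0) = p s * PM s m := by
            rw [hPMdef, Finset.mul_sum]
            exact Finset.sum_congr rfl fun r _ => by split <;> simp
          rw [this]
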